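/- If every nontrivial finitely generated subgroup of a group G admits a nontrivial left-orderable quotient, then G is left-orderable. (Burns–Hale theorem; in particular, every locally indicable group is left-orderable.) -/

import Mathlib

/-- A group is left-orderable if it admits a strict total order invariant under
left multiplication. -/
def IsLeftOrderable (G : Type*) [Group G] : Prop :=
  ∃ r : G → G → Prop, IsStrictTotalOrder G r ∧ ∀ f g h : G, r g h → r (f * g) (f * h)

/-- Finite step of Burns–Hale: for any finite set of nontrivial elements, one can
choose signs so that the subsemigroup generated by the signed elements avoids `1`. -/
theorem burnsHale_finite {G : Type u} [Group G]
    (h : ∀ H : Subgroup G, H ≠ ⊥ → H.FG →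
      ∃ (L : Type u) (inst : Group L), Nontrivial L ∧ @IsLeftOrderable L inst ∧
        ∃ φ : H →* L, Function.Surjective φ) :
    ∀ S : Finset G, (1:G) ∉ S →
      ∃ ε : G → Bool,
        (1:G) ∉ Subsemigroup.closure {x : G | ∃ g ∈ S, x = cond (ε g) g g⁻¹} := by
  classical
  intro S
  induction S using Finset.strongInduction with
  | _ S ih =>
  intro hS
  rcases S.eq_empty_or_nonempty with rfl | ⟨g₀, hg₀⟩
  · refine ⟨fun _ => true, ?_⟩
    have he : {x : G | ∃ g ∈ (∅ : Finset G), x = cond true g g⁻¹} = ∅ := by simp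
    rw [he, Subsemigroup.closure_empty]
    exact Subsemigroup.notMem_bot
  · set H : Subgroup G := Subgroup.closure (S : Set G) with hH
    have hSH : ∀ g ∈ S, g ∈ H := fun g hg => Subgroup.subset_closure hg
    have hHbot : H ≠ ⊥ := by
      intro hb
      have h0 : g₀ ∈ (⊥ : Subgroup G) := hb ▸ hSH g₀ hg₀
      rw [Subgroup.mem_bot] at h0
      exact hS (h0 ▸ hg₀)
    obtain ⟨L, instL, ntL, hLO, φ, hφ⟩ := h H hHbot ⟨S, rfl⟩
    obtain ⟨rL, hsto, hinv⟩ := hLO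
    haveI := hsto
    set pos : L → Prop := fun x => rL 1 x with hposdef
    have pos_mul : ∀ x y, pos x → pos y → pos (x * y) := by
      intro x y hx hy
      have h1 : rL (x * 1) (x * y) := hinv x 1 y hy
      rw [mul_one] at h1
      exact trans_of rL hx h1
    have pos_total : ∀ x : L, x ≠ 1 → pos x ∨ pos x⁻¹ := by
      intro x hx
      rcases trichotomous_of rL 1 x with h1 | h1 | h1
      · exact Or.inl h1
      · exact absurd h1.symm hx
      · right
        have h2 : rL (x⁻¹ * x) (x⁻¹ * 1) := hinv x⁻¹ x 1 h1
        simpa using h2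
    set Φ : G → L := fun g => if hg : g ∈ H then φ ⟨g, hg⟩ else 1 with hΦdef
    have Φ_mul : ∀ {x y : G}, x ∈ H → y ∈ H → Φ (x * y) = Φ x * Φ y := by
      intro x y hx hy
      simp only [hΦdef, dif_pos hx, dif_pos hy, dif_pos (mul_mem hx hy)]
      rw [← map_mul]
      rfl
    have Φ_inv : ∀ {x : G}, x ∈ H → Φ x⁻¹ = (Φ x)⁻¹ := by
      intro x hx
      simp only [hΦdef, dif_pos hx, dif_pos (inv_mem hx)]
      rw [← map_inv]
      rfl
    have Φ_one : Φ 1 = 1 := by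
      simp only [hΦdef, dif_pos (one_mem H)]
      exact map_one φ
    have hex : ∃ g ∈ S, Φ g ≠ 1 := by
      by_contra hall
      push_neg at hall
      have hle : H ≤ Subgroup.map H.subtype φ.ker := by
        refine (Subgroup.closure_le _).mpr ?_
        intro g hg
        refine ⟨⟨g, hSH g hg⟩, ?_, rfl⟩
        rw [SetLike.mem_coe, MonoidHom.mem_ker]
        simpa only [hΦdef, dif_pos (hSH g hg)] using hall g hg
      obtain ⟨x, hx⟩ := exists_ne (1 : L)
      obtain ⟨y, hy⟩ := hφ x
      obtain ⟨z, hz, hzy⟩ := hle y.2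
      have hzy' : z = y := Subtype.ext hzy
      rw [SetLike.mem_coe, MonoidHom.mem_ker] at hz
      rw [hzy', hy] at hz
      exact hx hz
    set S₀ : Finset G := S.filter (fun g => Φ g = 1) with hS₀def
    have hS₀ss : S₀ ⊂ S := by
      rw [hS₀def, Finset.filter_ssubset]
      exact hex
    obtain ⟨ε₀, hε₀⟩ := ih S₀ hS₀ss (fun h1 => hS (Finset.mem_filter.mp h1).1)
    set T₀ : Set G := {x : G | ∃ g ∈ S₀, x = cond (ε₀ g) g g⁻¹} with hT₀def
    set ε : G → Bool := fun g => if Φ g = 1 then ε₀ g else (if pos (Φ g) then true else false)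
      with hεdef
    refine ⟨ε, ?_⟩
    intro hmem
    have main : ∀ x ∈ Subsemigroup.closure {x : G | ∃ g ∈ S, x = cond (ε g) g g⁻¹},
        x ∈ H ∧ ((Φ x = 1 ∧ x ∈ Subsemigroup.closure T₀) ∨ pos (Φ x)) := by
      intro x hx
      induction hx using Subsemigroup.closure_induction with
      | mem x hxm =>
        obtain ⟨g, hgS, rfl⟩ := hxm
        have gH := hSH g hgS
        by_cases hg1 : Φ g = 1
        · have hεg : ε g = ε₀ g := if_pos hg1
          rw [hεg]
          have hgS₀ : g ∈ S₀ := Finset.mem_filter.mpr ⟨hgS, hg1⟩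
          refine ⟨?_, Or.inl ⟨?_, Subsemigroup.subset_closure ⟨g, hgS₀, rfl⟩⟩⟩
          · cases ε₀ g
            · exact inv_mem gH
            · exact gH
          · cases ε₀ g
            · rw [Bool.cond_false, Φ_inv gH, hg1, inv_one]
            · exact hg1
        · have hεg : ε g = (if pos (Φ g) then true else false) := if_neg hg1
          by_cases hp : pos (Φ g)
          · have : ε g = true := by rw [hεg, if_pos hp]
            rw [this, Bool.cond_true]
            exact ⟨gH, Or.inr hp⟩
          · have hεf : ε g = false := by rw [hεg, if_neg hp]
            rw [hεf, Bool.cond_false]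
            rcases pos_total (Φ g) hg1 with hp' | hp'
            · exact absurd hp' hp
            · refine ⟨inv_mem gH, Or.inr ?_⟩
              rwa [Φ_inv gH]
      | mul x y hxc hyc px py =>
        obtain ⟨hxH, px⟩ := px
        obtain ⟨hyH, py⟩ := py
        refine ⟨mul_mem hxH hyH, ?_⟩
        rw [Φ_mul hxH hyH]
        rcases px with ⟨hx1, hxc0⟩ | hxp <;> rcases py with ⟨hy1, hyc0⟩ | hyp
        · exact Or.inl ⟨by rw [hx1, hy1, one_mul], mul_mem hxc0 hyc0⟩
        · refine Or.inr ?_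
          rw [hx1, one_mul]
          exact hyp
        · refine Or.inr ?_
          rw [hy1, mul_one]
          exact hxp
        · exact Or.inr (pos_mul _ _ hxp hyp)
    obtain ⟨h1H, hc⟩ := main 1 hmem
    rcases hc with ⟨_, h1c⟩ | hp
    · exact hε₀ h1c
    · rw [Φ_one] at hp
      exact irrefl_of rL 1 hp

/-- (Burns–Hale) If every nontrivial finitely generated subgroup of `G` admits
a surjective homomorphism onto a nontrivial left-orderable group, then `G` is
left-orderable. -/
theorem burns_hale {G : Type u} [Group G]
    (h : ∀ H : Subgroup G, H ≠ ⊥ → H.FG →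
      ∃ (L : Type u) (inst : Group L), Nontrivial L ∧ @IsLeftOrderable L inst ∧
        ∃ φ : H →* L, Function.Surjective φ) :
    IsLeftOrderable G := by
  classical
  have key : ∀ S : Finset G, ∃ ε : G → Bool,
      (1:G) ∉ Subsemigroup.closure {x : G | ∃ g ∈ S.erase 1, x = cond (ε g) g g⁻¹} :=
    fun S => burnsHale_finite h (S.erase 1) (Finset.notMem_erase 1 S)
  choose ε hε using key
  set cl : Finset G → Subsemigroup G := fun S =>
    Subsemigroup.closure {x : G | ∃ g ∈ S.erase 1, x = cond (ε S g) g g⁻¹} with hcl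
  let U : Ultrafilter (Finset G) := Ultrafilter.of Filter.atTop
  have hU : (U : Filter (Finset G)) ≤ Filter.atTop := Ultrafilter.of_le Filter.atTop
  set P : Set G := {x : G | {S : Finset G | x ∈ cl S} ∈ U} with hP
  have hP1 : (1:G) ∉ P := by
    intro hp
    have hp' : {S : Finset G | (1:G) ∈ cl S} ∈ (U : Filter (Finset G)) := hp
    have he : {S : Finset G | (1:G) ∈ cl S} = ∅ := by
      ext S
      simp only [Set.mem_setOf_eq, Set.mem_empty_iff_false, iff_false]
      exact hε S
    rw [he] at hp'
    exact Filter.empty_notMem _ hp'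
  have hPmul : ∀ x y, x ∈ P → y ∈ P → x * y ∈ P := by
    intro x y hx hy
    rw [hP] at hx hy ⊢
    filter_upwards [hx, hy] with S hxS hyS
    exact mul_mem hxS hyS
  have hPtot : ∀ x : G, x ≠ 1 → x ∈ P ∨ x⁻¹ ∈ P := by
    intro x hx
    have hA : {S : Finset G | x ∈ S} ∈ (U : Filter (Finset G)) := by
      refine hU ?_
      have h1 : {S : Finset G | ({x} : Finset G) ≤ S} ∈ (Filter.atTop : Filter (Finset G)) :=
        Filter.mem_atTop {x}
      refine Filter.mem_of_superset h1 ?_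
      intro S hS
      exact Finset.singleton_subset_iff.mp hS
    have hsub : {S : Finset G | x ∈ S} ⊆
        {S : Finset G | x ∈ cl S} ∪ {S : Finset G | x⁻¹ ∈ cl S} := by
      intro S hS
      have hxe : x ∈ S.erase 1 := Finset.mem_erase.mpr ⟨hx, hS⟩
      have hm : cond (ε S x) x x⁻¹ ∈ cl S :=
        Subsemigroup.subset_closure ⟨x, hxe, rfl⟩
      cases hb : ε S x
      · right
        rw [hb, Bool.cond_false] at hm
        exact hm
      · left
        rw [hb, Bool.cond_true] at hm
        exact hm
    have hun : {S : Finset G | x ∈ cl S} ∪ {S : Finset G | x⁻¹ ∈ cl S} ∈ U :=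
      Filter.mem_of_superset hA hsub
    rcases (Ultrafilter.union_mem_iff (f := U)).mp hun with h1 | h1
    · exact Or.inl h1
    · exact Or.inr h1
  refine ⟨fun g h' => g⁻¹ * h' ∈ P, ?_, ?_⟩
  · refine { trichotomous := ?_, irrefl := ?_, trans := ?_ }
    · -- trichotomous
      intro a b
      by_cases hab : a = b
      · exact fun _ _ => hab
      · have hne : a⁻¹ * b ≠ 1 := by
          intro hc
          apply hab
          have h2 : a * (a⁻¹ * b) = a * 1 := by rw [hc]
          rw [← mul_assoc, mul_inv_cancel, one_mul, mul_one] at h2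
          exact h2.symm
        rcases hPtot _ hne with h1 | h1
        · exact fun h2 _ => absurd h1 h2
        · refine fun _ h3 => absurd ?_ h3
          rwa [mul_inv_rev, inv_inv] at h1
    · -- irrefl
      intro a ha
      rw [inv_mul_cancel] at ha
      exact hP1 ha
    · -- trans
      intro a b c hab hbc
      have := hPmul _ _ hab hbc
      rwa [mul_assoc, ← mul_assoc b, mul_inv_cancel, one_mul] at this
  · intro f g h' hgh
    have : (f * g)⁻¹ * (f * h') = g⁻¹ * h' := by group
    rwa [this]
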